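/- For all integers n ≥ 1 and n+1 ≥ k ≥ 2, the nested-sum quantity a_{n,k} is related to the signed Stirling numbers of the first kind by a_{n,k} = (−1)^{n+k−1} (k−1)! · s(n, k−1). -/

import Mathlib

/-- Signed Stirling numbers of the first kind, defined by `s(0,0)=1`,
`s(n,0)=0` for `n ≥ 1`, `s(0,k)=0` for `k ≥ 1`, and
`s(n+1,k+1) = s(n,k) - n·s(n,k+1)`. -/
def stirling1 : ℕ → ℕ → ℤ
  | 0, 0 => 1
  | 0, _ + 1 => 0
  | _ + 1, 0 => 0
  | n + 1, k + 1 => stirling1 n k - (n : ℤ) * stirling1 n (k + 1)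

/-- `nestedSum j m` is the `j`-fold nested sum
`Σ_{ℓ1=1}^{m} (1/ℓ1) Σ_{ℓ2=1}^{ℓ1-1} (1/ℓ2) ⋯ Σ_{ℓj=1}^{ℓ_{j-1}-1} (1/ℓj)`,
with the empty (`j = 0`) nested sum equal to `1`. -/
noncomputable def nestedSum : ℕ → ℕ → ℝ
  | 0, _ => 1
  | j + 1, m => ∑ l ∈ Finset.Icc 1 m, (1 / (l : ℝ)) * nestedSum j (l - 1)
termination_by j _ => j

/-- The quantity `a_{n,k} = (k-1)!(n-1)!` times the `(k-2)`-fold nested sum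
`Σ_{ℓ1=1}^{n-1} (1/ℓ1) ⋯ Σ_{ℓ_{k-2}=1}^{ℓ_{k-3}-1} (1/ℓ_{k-2})`; in particular
`a_{n,2} = (n-1)!`. -/
noncomputable def a (n k : ℕ) : ℝ :=
  (Nat.factorial (k - 1) : ℝ) * (Nat.factorial (n - 1) : ℝ) * nestedSum (k - 2) (n - 1)

lemma nestedSum_succ (j m : ℕ) :
    nestedSum (j + 1) m = ∑ l ∈ Finset.Icc 1 m, (1 / (l : ℝ)) * nestedSum j (l - 1) := by
  rw [nestedSum]

lemma nestedSum_succ_succ (j m : ℕ) :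
    nestedSum (j + 1) (m + 1) =
      nestedSum (j + 1) m + (1 / ((m + 1 : ℕ) : ℝ)) * nestedSum j m := by
  rw [nestedSum_succ, nestedSum_succ,
    Finset.sum_Icc_succ_top (Nat.one_le_iff_ne_zero.mpr (Nat.succ_ne_zero m))]
  norm_num

lemma key (m : ℕ) : ∀ j : ℕ, ((m.factorial : ℝ)) * nestedSum j m
    = (-1 : ℝ) ^ (m + j) * (stirling1 (m + 1) (j + 1) : ℝ) := by
  induction m with
  | zero =>
    intro j
    cases j with
    | zero => simp [nestedSum, stirling1]
    | succ j => simp [nestedSum, stirling1]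
  | succ m ih =>
    intro j
    cases j with
    | zero =>
      have h0 := ih 0
      simp only [nestedSum, mul_one, add_zero] at h0
      have hn0 : nestedSum 0 (m + 1) = 1 := by rw [nestedSum]
      have hs : stirling1 (m + 2) 1 = -(m + 1 : ℤ) * stirling1 (m + 1) 1 := by
        have h : stirling1 (m + 2) 1 =
            stirling1 (m + 1) 0 - (m + 1 : ℤ) * stirling1 (m + 1) 1 := rfl
        rw [h]
        have h1 : stirling1 (m + 1) 0 = 0 := rfl
        rw [h1]; ring
      have hidx : m + 1 + 0 = m + 1 := rfl
      rw [hn0, mul_one, hidx, hs]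
      push_cast [Nat.factorial_succ, pow_succ]
      linear_combination ((m : ℝ) + 1) * h0
    | succ j =>
      rw [nestedSum_succ_succ]
      have h1 := ih (j + 1)
      have h2 := ih j
      have hs : (stirling1 (m + 2) (j + 2) : ℤ) =
          stirling1 (m + 1) (j + 1) - (m + 1 : ℤ) * stirling1 (m + 1) (j + 2) := rfl
      have expand : ((m + 1).factorial : ℝ) = ((m : ℝ) + 1) * (m.factorial : ℝ) := by
        rw [Nat.factorial_succ]; push_cast; ring
      rw [mul_add, expand]
      have e1 : ((m : ℝ) + 1) * (m.factorial : ℝ) * nestedSum (j + 1) m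
          = ((m : ℝ) + 1) * ((-1 : ℝ) ^ (m + (j + 1)) * (stirling1 (m + 1) (j + 2) : ℝ)) := by
        rw [mul_assoc, h1]
      have e2 : ((m : ℝ) + 1) * (m.factorial : ℝ) * (1 / ((m + 1 : ℕ) : ℝ) * nestedSum j m)
          = (-1 : ℝ) ^ (m + j) * (stirling1 (m + 1) (j + 1) : ℝ) := by
        push_cast
        field_simp
        rw [← h2]
      rw [e1, e2, hs]
      push_cast
      have hp1 : (-1 : ℝ) ^ (m + 1 + (j + 1)) = (-1 : ℝ) ^ (m + j) := by
        have h : m + 1 + (j + 1) = (m + j) + 2 := by ring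
        rw [h, pow_add]; norm_num
      have hp2 : (-1 : ℝ) ^ (m + (j + 1)) = -(-1 : ℝ) ^ (m + j) := by
        have h : m + (j + 1) = (m + j) + 1 := by ring
        rw [h, pow_succ]; ring
      rw [hp1, hp2]
      ring

/-- For `n ≥ 1` and `2 ≤ k ≤ n+1`, the nested-sum quantity `a_{n,k}` is related to
the signed Stirling numbers of the first kind by `a_{n,k} = (-1)^{n+k-1} (k-1)! s(n,k-1)`. -/
theorem a_eq_stirling1 (n k : ℕ) (hn : 1 ≤ n) (h2 : 2 ≤ k) (hk : k ≤ n + 1) :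
    a n k = (-1 : ℝ) ^ (n + k - 1) * (Nat.factorial (k - 1) : ℝ) *
      (stirling1 n (k - 1) : ℝ) := by
  obtain ⟨m, rfl⟩ : ∃ m, n = m + 1 := ⟨n - 1, (Nat.succ_pred_eq_of_pos hn).symm⟩
  obtain ⟨j, rfl⟩ : ∃ j, k = j + 2 := ⟨k - 2, (Nat.sub_add_cancel h2).symm⟩
  unfold a
  have hred : m + 1 + (j + 2) - 1 = (m + j) + 2 := by omega
  have h1 : m + 1 - 1 = m := rfl
  have h2' : j + 2 - 2 = j := rfl
  have h3 : j + 2 - 1 = j + 1 := rfl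
  rw [h1, h2', h3, hred, mul_assoc, key m j]
  have h4 : (-1 : ℝ) ^ (m + j + 2) = (-1 : ℝ) ^ (m + j) := by
    rw [pow_add]; norm_num
  rw [h4]
  ring
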